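/- Smooth approximation to interval indicators: Let ψ : ℝ → ℂ be a Schwartz function with ∫_ℝ ψ(x) dx = 1. Then for any interval [a,b] ⊂ ℝ and any 0 < ε ≤ 1, one has the pointwise bound |Σ_{y∈[a,b]∩ℤ} ε·ψ(ε(x−y)) − 1_{[a,b]}(x)| ≲_ψ ε^{10} + ⟨ε(x−a)⟩^{−10} + ⟨ε(x−b)⟩^{−10} for all x ∈ ℤ. -/

import Mathlib

open MeasureTheory
open scoped Real
open Filter Asymptotics
open scoped FourierTransform


lemma arctan_lb {d c : ℝ} (hd : 0 ≤ d) (h : d ≤ c) :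
    (c - d) * (1 + c^2)⁻¹ ≤ Real.arctan c - Real.arctan d := by
  rcases eq_or_lt_of_le h with rfl | hlt
  · simp [sub_self]
  obtain ⟨ξ, hξ, heq⟩ := exists_hasDerivAt_eq_slope Real.arctan (fun x => 1/(1+x^2)) hlt
    (Real.continuous_arctan.continuousOn) (fun x _ => Real.hasDerivAt_arctan x)
  rw [eq_div_iff (by linarith : c - d ≠ 0)] at heq
  rw [← heq]
  have hξ2 : ξ^2 ≤ c^2 := by nlinarith [hξ.1, hξ.2, hd]
  have h1 : (0:ℝ) < 1 + ξ^2 := by positivity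
  have h2 : (0:ℝ) < 1 + c^2 := by positivity
  rw [one_div, mul_comm]
  gcongr

lemma sum_nat_succ {ε : ℝ} (hε : 0 < ε) :
    Summable (fun m : ℕ => ε * (1 + (ε*(m+1:ℝ))^2)⁻¹) ∧
      ∑' m : ℕ, ε * (1 + (ε*(m+1:ℝ))^2)⁻¹ ≤ 2 := by
  have key : ∀ N : ℕ, ∑ m ∈ Finset.range N, ε * (1 + (ε*(m+1:ℝ))^2)⁻¹ ≤ 2 := by
    intro N
    have h1 : ∑ m ∈ Finset.range N, ε * (1 + (ε*(m+1:ℝ))^2)⁻¹ ≤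
        ∑ m ∈ Finset.range N, (Real.arctan (ε*(m+1)) - Real.arctan (ε*m)) := by
      apply Finset.sum_le_sum
      intro m _
      have := arctan_lb (d := ε*m) (c := ε*(m+1))
        (by positivity) (by nlinarith [hε.le])
      calc ε * (1 + (ε*(m+1:ℝ))^2)⁻¹ = (ε*(m+1) - ε*m) * (1 + (ε*(m+1:ℝ))^2)⁻¹ := by ring_nf
        _ ≤ _ := this
    have h2 : ∑ m ∈ Finset.range N, (Real.arctan (ε*(m+1:ℝ)) - Real.arctan (ε*m)) =
        Real.arctan (ε*N) - Real.arctan (ε*0) := by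
      have := Finset.sum_range_sub (fun m => Real.arctan (ε*m)) N
      push_cast at this ⊢
      convert this using 2
    rw [h2] at h1
    have := Real.arctan_lt_pi_div_two (ε*N)
    have hpi : (π:ℝ) / 2 ≤ 2 := by
      nlinarith [Real.pi_lt_d2]
    simp only [mul_zero, Real.arctan_zero, sub_zero] at h1
    linarith
  have hnn : ∀ m : ℕ, 0 ≤ ε * (1 + (ε*(m+1:ℝ))^2)⁻¹ := fun m => by positivity
  have hs := summable_of_sum_range_le hnn key
  exact ⟨hs, Summable.tsum_le_of_sum_range_le hs key⟩

lemma sum_int {ε : ℝ} (hε : 0 < ε) (hε1 : ε ≤ 1) :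
    Summable (fun m : ℤ => ε * (1 + (ε*(m:ℝ))^2)⁻¹) ∧
      ∑' m : ℤ, ε * (1 + (ε*(m:ℝ))^2)⁻¹ ≤ 7 := by
  obtain ⟨hs, hb⟩ := sum_nat_succ hε
  set f : ℤ → ℝ := fun m => ε * (1 + (ε*(m:ℝ))^2)⁻¹ with hf
  have hpos : ∀ n : ℕ, f ((n+1:ℕ):ℤ) = ε * (1 + (ε*(n+1:ℝ))^2)⁻¹ := by
    intro n; simp only [hf]; push_cast; ring_nf
  have hneg : ∀ n : ℕ, f (-(n+1)) = ε * (1 + (ε*(n+1:ℝ))^2)⁻¹ := by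
    intro n; simp only [hf]; push_cast; ring_nf
  have hsn : Summable (fun n : ℕ => f n) := by
    rw [← summable_nat_add_iff 1]
    exact hs.congr (fun n => (hpos n).symm)
  have hsneg : Summable (fun n : ℕ => f (-(n+1))) := hs.congr (fun n => (hneg n).symm)
  have hsum : Summable f := Summable.of_nat_of_neg_add_one hsn hsneg
  refine ⟨hsum, ?_⟩
  rw [tsum_of_nat_of_neg_add_one hsn hsneg]
  have e1 : ∑' n : ℕ, f n ≤ 3 := by
    rw [Summable.tsum_eq_zero_add hsn]
    have h3 : ∑' n : ℕ, f ((n+1:ℕ):ℤ) = ∑' m : ℕ, ε * (1 + (ε*(m+1:ℝ))^2)⁻¹ :=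
      tsum_congr (fun n => hpos n)
    have hf0 : f 0 ≤ 1 := by
      simp only [hf, Int.cast_zero, mul_zero]
      nlinarith
    rw [h3]
    have : f ((0:ℕ):ℤ) = f 0 := by norm_num
    rw [this]
    linarith [hb]
  have e2 : ∑' n : ℕ, f (-(n+1)) ≤ 2 := by
    have : ∑' n : ℕ, f (-(n+1)) = ∑' m : ℕ, ε * (1 + (ε*(m+1:ℝ))^2)⁻¹ :=
      tsum_congr (fun n => hneg n)
    rw [this]; exact hb
  linarith

lemma schwartz_decay6 (f : SchwartzMap ℝ ℂ) : ∃ D : ℝ, 0 ≤ D ∧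
    ∀ t : ℝ, ‖f t‖ ≤ D * ((1 + t^2)^6)⁻¹ := by
  refine ⟨2^12 * ((Finset.Iic ((12,0) : ℕ × ℕ)).sup
    (fun m => SchwartzMap.seminorm ℝ m.1 m.2)) f, by positivity, ?_⟩
  intro t
  have h := SchwartzMap.one_add_le_sup_seminorm_apply (𝕜 := ℝ) (m := (12,0)) (k := 12) (n := 0)
    le_rfl le_rfl f t
  rw [norm_iteratedFDeriv_zero] at h
  have h2 : (1 + t^2)^6 ≤ (1 + ‖t‖)^12 := by
    have : (1 + t^2) ≤ (1 + ‖t‖)^2 := by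
      have : ‖t‖^2 = t^2 := by rw [Real.norm_eq_abs, sq_abs]
      nlinarith [norm_nonneg t]
    calc (1 + t^2)^6 ≤ ((1 + ‖t‖)^2)^6 := by
          apply pow_le_pow_left₀ (by positivity) this
      _ = (1 + ‖t‖)^12 := by ring
  have hp : (0:ℝ) < (1 + t^2)^6 := by positivity
  rw [← div_eq_mul_inv, le_div_iff₀ hp]
  calc ‖f t‖ * (1 + t^2)^6 ≤ ‖f t‖ * (1 + ‖t‖)^12 := by
        apply mul_le_mul_of_nonneg_left h2 (norm_nonneg _)
    _ ≤ _ := by rw [mul_comm]; exact h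

lemma fourier_scale (ψ : SchwartzMap ℝ ℂ) {ε : ℝ} (hε : 0 < ε) (ξ : ℝ) :
    𝓕 (fun t : ℝ => (ε:ℂ) * ψ (ε * t)) ξ
      = 𝓕 (⇑ψ) (ξ / ε) := by
  rw [Real.fourier_real_eq, Real.fourier_real_eq]
  have h1 : ∀ v : ℝ, (𝐞 (-(v * ξ)) : Circle) • ((ε:ℂ) * ψ (ε * v))
      = (ε:ℂ) * ((𝐞 (-(ε*v * (ξ/ε))) : Circle) • ψ (ε * v)) := by
    intro v
    have he : ε * v * (ξ / ε) = v * ξ := by field_simp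
    rw [he]; simp only [Circle.smul_def, smul_eq_mul]; ring
  simp_rw [h1]
  rw [MeasureTheory.integral_const_mul]
  have h2 : (∫ v : ℝ, (𝐞 (-(ε*v * (ξ/ε))) : Circle) • ψ (ε*v))
      = |ε⁻¹| • ∫ s : ℝ, (𝐞 (-(s * (ξ/ε))) : Circle) • ψ s :=
    MeasureTheory.Measure.integral_comp_mul_left (fun s => (𝐞 (-(s * (ξ/ε))) : Circle) • ψ s) ε
  rw [h2, abs_of_pos (inv_pos.mpr hε), Complex.real_smul, ← mul_assoc,
    ← Complex.ofReal_mul, mul_inv_cancel₀ hε.ne', Complex.ofReal_one, one_mul]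

lemma fourier_at_zero (f : ℝ → ℂ) : 𝓕 f 0 = ∫ x, f x := by
  rw [Real.fourier_real_eq]
  simp










-- scaled Schwartz is BigO cocompact of |x|^(-2)
lemma scaled_bigO (f : SchwartzMap ℝ ℂ) (c : ℂ) {ε : ℝ} (hε : ε ≠ 0) :
    (fun t : ℝ => c * f (ε * t)) =O[cocompact ℝ] (fun x : ℝ => |x| ^ (-2:ℝ)) := by
  have h := f.isBigO_cocompact_rpow (-2)
  have ht : Filter.Tendsto (fun t : ℝ => ε * t) (cocompact ℝ) (cocompact ℝ) :=
    (Homeomorph.mulLeft₀ ε hε).map_cocompact.le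
  have h2 : (fun t : ℝ => f (ε * t)) =O[cocompact ℝ] (fun t : ℝ => ‖ε * t‖ ^ (-2:ℝ)) :=
    h.comp_tendsto ht
  have h3 : (fun t : ℝ => ‖ε * t‖ ^ (-2:ℝ)) =O[cocompact ℝ] (fun x : ℝ => |x| ^ (-2:ℝ)) := by
    apply IsBigO.of_bound (|ε| ^ (-2:ℝ))
    filter_upwards with t
    simp only [norm_mul, Real.norm_eq_abs]
    rw [Real.mul_rpow (abs_nonneg _) (abs_nonneg _),
      abs_of_nonneg (by positivity), abs_of_nonneg (Real.rpow_nonneg (abs_nonneg t) _)]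
  have h4 := (h2.trans h3).const_mul_left c
  exact h4.congr_left (fun t => rfl)

lemma poisson_est (ψ : SchwartzMap ℝ ℂ) (hψ : ∫ x : ℝ, ψ x = 1) :
    ∃ D : ℝ, 0 ≤ D ∧ ∀ ε : ℝ, 0 < ε → ε ≤ 1 →
      ‖(∑' m : ℤ, (ε:ℂ) * ψ (ε * (m:ℝ))) - 1‖ ≤ 7 * D * ε^10 := by
  set φ := SchwartzMap.fourierTransformCLM ℝ ψ with hφ
  obtain ⟨D, hD0, hD⟩ := schwartz_decay6 φ
  refine ⟨D, hD0, ?_⟩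
  intro ε hε hε1
  set g : ℝ → ℂ := fun t => (ε:ℂ) * ψ (ε * t) with hg
  have hgc : Continuous g := by continuity
  have hB1 : g =O[cocompact ℝ] (fun x : ℝ => |x| ^ (-2:ℝ)) := scaled_bigO ψ (ε:ℂ) hε.ne'
  have hFg : 𝓕 g = fun ξ : ℝ => φ (ξ / ε) := by
    funext ξ
    rw [hφ, SchwartzMap.fourierTransformCLM_apply]
    exact fourier_scale ψ hε ξ
  have hB2 : (𝓕 g) =O[cocompact ℝ] (fun x : ℝ => |x| ^ (-2:ℝ)) := by
    rw [hFg]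
    have := scaled_bigO φ 1 (inv_ne_zero hε.ne')
    simp only [one_mul] at this
    apply this.congr_left
    intro ξ
    rw [div_eq_inv_mul]
  have hpsum := Real.tsum_eq_tsum_fourier_of_rpow_decay hgc one_lt_two hB1 hB2 0
  simp only [zero_add] at hpsum
  -- RHS simplification
  have hps2 : ∑' n : ℤ, 𝓕 g (n:ℝ) * fourier n ((0:ℝ) : UnitAddCircle)
      = ∑' n : ℤ, φ ((n:ℝ) / ε) := by
    apply tsum_congr
    intro n
    rw [hFg]
    norm_num [fourier_eval_zero]
  have key : ∑' m : ℤ, (ε:ℂ) * ψ (ε * (m:ℝ)) = ∑' n : ℤ, φ ((n:ℝ) / ε) := by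
    rw [← hps2, ← hpsum]
  rw [key]
  -- now the estimate
  have hφ0 : φ (0:ℝ) = 1 := by
    rw [hφ, SchwartzMap.fourierTransformCLM_apply]; exact (fourier_at_zero ψ).trans hψ
  -- pointwise bound for nonzero n
  have hpt : ∀ n : ℤ, n ≠ 0 → ‖φ ((n:ℝ)/ε)‖ ≤ D * ε^10 * (1 + (n:ℝ)^2)⁻¹ := by
    intro n hn
    have h1 : (1:ℝ) ≤ (n:ℝ)^2 := by
      have h : (1:ℝ) ≤ |(n:ℝ)| := by
        have := Int.one_le_abs hn
        calc (1:ℝ) ≤ ((|n| : ℤ) : ℝ) := by exact_mod_cast this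
          _ = |(n:ℝ)| := by push_cast; ring
      nlinarith [sq_abs ((n:ℝ)), mul_le_mul h h zero_le_one (abs_nonneg ((n:ℝ)))]
    have hu : ((n:ℝ)/ε)^2 = (n:ℝ)^2/ε^2 := by ring
    have h2 : (1 + (n:ℝ)^2) * (ε^10)⁻¹ ≤ (1 + ((n:ℝ)/ε)^2)^6 := by
      have hε2 : (0:ℝ) < ε^2 := by positivity
      have hε2le : ε^2 ≤ 1 := by nlinarith
      have hn2 : (n:ℝ)^2 ≤ (n:ℝ)^2/ε^2 := by
        rw [le_div_iff₀ hε2]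
        nlinarith [sq_nonneg ((n:ℝ))]
      have hn3 : 1/ε^2 ≤ (n:ℝ)^2/ε^2 := by gcongr
      have h10 : (1/ε^2)^5 = (ε^10)⁻¹ := by
        field_simp
      have hA : (ε^10)⁻¹ ≤ ((n:ℝ)^2/ε^2)^5 := by
        rw [← h10]
        exact pow_le_pow_left₀ (by positivity) hn3 5
      have hB : 1 + (n:ℝ)^2 ≤ 1 + (n:ℝ)^2/ε^2 := by linarith
      calc (1 + (n:ℝ)^2) * (ε^10)⁻¹ = (ε^10)⁻¹ * (1 + (n:ℝ)^2) := by ring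
        _ ≤ ((n:ℝ)^2/ε^2)^5 * (1 + (n:ℝ)^2/ε^2) :=
            mul_le_mul hA hB (by positivity) (by positivity)
        _ ≤ (1 + (n:ℝ)^2/ε^2)^5 * (1 + (n:ℝ)^2/ε^2) := by
            have : ((n:ℝ)^2/ε^2)^5 ≤ (1 + (n:ℝ)^2/ε^2)^5 :=
              pow_le_pow_left₀ (by positivity) (by linarith) 5
            exact mul_le_mul_of_nonneg_right this (by positivity)
        _ = (1 + (n:ℝ)^2/ε^2)^6 := by ring
        _ = (1 + ((n:ℝ)/ε)^2)^6 := by rw [hu]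
    calc ‖φ ((n:ℝ)/ε)‖ ≤ D * ((1 + ((n:ℝ)/ε)^2)^6)⁻¹ := hD _
      _ ≤ D * ((1 + (n:ℝ)^2) * (ε^10)⁻¹)⁻¹ := by
          gcongr
      _ = D * ε^10 * (1 + (n:ℝ)^2)⁻¹ := by
          rw [mul_inv, inv_inv]; ring
  have hone : Summable (fun m : ℤ => (1 + (m:ℝ)^2)⁻¹) ∧
      ∑' m : ℤ, (1 + (m:ℝ)^2)⁻¹ ≤ 7 := by
    obtain ⟨hs, hb⟩ := sum_int one_pos le_rfl
    constructor
    · exact hs.congr (fun m => by norm_num)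
    · calc ∑' m : ℤ, (1 + (m:ℝ)^2)⁻¹ = ∑' m : ℤ, 1 * (1 + (1*(m:ℝ))^2)⁻¹ :=
          tsum_congr (fun m => by norm_num)
        _ ≤ 7 := hb
  have hg1 : Summable (fun n : ℤ => D * ε^10 * (1 + (n:ℝ)^2)⁻¹) := hone.1.mul_left _
  have hite : Summable (fun n : ℤ => if n = 0 then (0:ℂ) else φ ((n:ℝ)/ε)) := by
    apply Summable.of_norm_bounded hg1
    intro n
    by_cases h : n = 0
    · simp only [h, if_true, norm_zero]
      positivity
    · simp only [h, if_false]
      exact hpt n h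
  have hsummand : Summable (fun n : ℤ => φ ((n:ℝ)/ε)) := by
    have hfin : Summable (fun n : ℤ => if n = 0 then φ (((0:ℤ):ℝ)/ε) else 0) :=
      summable_of_ne_finset_zero (s := {0})
        (fun n hn => by
          simp only [Finset.mem_singleton] at hn
          simp [hn])
    apply (hfin.add hite).congr
    intro n
    by_cases h : n = 0
    · simp [h]
    · simp [h]
  rw [Summable.tsum_eq_add_tsum_ite hsummand 0]
  have hf0 : φ (((0:ℤ):ℝ)/ε) = 1 := by
    norm_num
    exact hφ0
  rw [hf0]
  have hT : (1:ℂ) + (∑' n : ℤ, if n = 0 then 0 else φ ((n:ℝ)/ε)) - 1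
      = ∑' n : ℤ, if n = 0 then 0 else φ ((n:ℝ)/ε) := by ring
  rw [hT]
  have hnorm : Summable (fun n : ℤ => ‖if n = 0 then (0:ℂ) else φ ((n:ℝ)/ε)‖) :=
    summable_norm_iff.mpr hite
  calc ‖∑' n : ℤ, if n = 0 then (0:ℂ) else φ ((n:ℝ)/ε)‖
      ≤ ∑' n : ℤ, ‖if n = 0 then (0:ℂ) else φ ((n:ℝ)/ε)‖ := norm_tsum_le_tsum_norm hnorm
    _ ≤ ∑' n : ℤ, D * ε^10 * (1 + (n:ℝ)^2)⁻¹ := by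
        apply Summable.tsum_le_tsum _ hnorm hg1
        intro n
        by_cases h : n = 0
        · simp only [h, if_true, norm_zero]
          positivity
        · simp only [h, if_false]
          exact hpt n h
    _ = D * ε^10 * ∑' n : ℤ, (1 + (n:ℝ)^2)⁻¹ := tsum_mul_left
    _ ≤ D * ε^10 * 7 := by
        apply mul_le_mul_of_nonneg_left hone.2 (by positivity)
    _ = 7 * D * ε^10 := by ring








lemma inv_bound {r u : ℝ} (h : r^2 ≤ u^2) :
    ((1+u^2)^6)⁻¹ ≤ ((1+r^2)^5)⁻¹ * (1+u^2)⁻¹ := by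
  rw [← mul_inv]
  apply inv_anti₀ (by positivity)
  calc (1+r^2)^5 * (1+u^2) ≤ (1+u^2)^5 * (1+u^2) := by
        apply mul_le_mul_of_nonneg_right _ (by positivity)
        exact pow_le_pow_left₀ (by positivity) (by linarith) 5
    _ = (1+u^2)^6 := by ring

set_option maxHeartbeats 1000000 in
theorem stmt7 (ψ : SchwartzMap ℝ ℂ) (hψ : ∫ x : ℝ, ψ x = 1) :
    ∃ C : ℝ, 0 < C ∧
      ∀ (a b : ℝ), a ≤ b → ∀ (ε : ℝ), 0 < ε → ε ≤ 1 → ∀ x : ℤ,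
        ‖(∑' y : ℤ, if a ≤ (y : ℝ) ∧ (y : ℝ) ≤ b then (ε : ℂ) * ψ (ε * ((x : ℝ) - (y : ℝ))) else 0)
            - (if a ≤ (x : ℝ) ∧ (x : ℝ) ≤ b then 1 else 0)‖ ≤
          C * (ε ^ 10 + ((1 + (ε * ((x : ℝ) - a)) ^ 2) ^ 5)⁻¹ +
            ((1 + (ε * ((x : ℝ) - b)) ^ 2) ^ 5)⁻¹) := by
  obtain ⟨Dψ, hDψ0, hDψ⟩ := schwartz_decay6 ψ
  obtain ⟨Dφ, hDφ0, hDφ⟩ := poisson_est ψ hψ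
  refine ⟨7*Dφ + 7*Dψ + 1, by positivity, ?_⟩
  intro a b hab ε hε hε1 x
  set F : ℤ → ℂ := fun y => (ε:ℂ) * ψ (ε * ((x:ℝ) - (y:ℝ))) with hF
  set Kf : ℤ → ℝ := fun y => ε * (1 + (ε * ((x:ℝ) - (y:ℝ)))^2)⁻¹ with hKf
  set ia : ℝ := ((1 + (ε * ((x:ℝ) - a))^2)^5)⁻¹ with hia
  set ib : ℝ := ((1 + (ε * ((x:ℝ) - b))^2)^5)⁻¹ with hib
  have hia0 : 0 ≤ ia := by positivity
  have hib0 : 0 ≤ ib := by positivity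
  have hε10 : (0:ℝ) ≤ ε^10 := by positivity
  -- kernel summability and bound
  have hker : Summable Kf ∧ ∑' y, Kf y ≤ 7 := by
    obtain ⟨hs, hb⟩ := sum_int hε hε1
    have hcomp : ∀ m : ℤ, Kf (Equiv.subLeft x m) = ε * (1 + (ε*(m:ℝ))^2)⁻¹ := by
      intro m
      simp only [hKf, Equiv.subLeft_apply]
      push_cast
      ring_nf
    have hs2 : Summable (Kf ∘ (Equiv.subLeft x)) := hs.congr (fun m => (hcomp m).symm)
    refine ⟨(Equiv.subLeft x).summable_iff.mp hs2, ?_⟩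
    rw [← Equiv.tsum_eq (Equiv.subLeft x) Kf]
    calc ∑' m, Kf (Equiv.subLeft x m) = ∑' m : ℤ, ε * (1 + (ε*(m:ℝ))^2)⁻¹ :=
        tsum_congr hcomp
      _ ≤ 7 := hb
  have hKf0 : ∀ y, 0 ≤ Kf y := fun y => by positivity
  -- norm bound on F
  have hFK : ∀ y : ℤ, ‖F y‖ ≤ Dψ * Kf y := by
    intro y
    have h6 : (1 + (ε * ((x:ℝ) - (y:ℝ)))^2)⁻¹ ≥ ((1 + (ε * ((x:ℝ) - (y:ℝ)))^2)^6)⁻¹ := by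
      apply inv_anti₀ (by positivity)
      calc (1 + (ε * ((x:ℝ) - (y:ℝ)))^2) = (1 + (ε * ((x:ℝ) - (y:ℝ)))^2)^1 := by ring
        _ ≤ (1 + (ε * ((x:ℝ) - (y:ℝ)))^2)^6 :=
          pow_le_pow_right₀ (by nlinarith [sq_nonneg (ε * ((x:ℝ) - (y:ℝ)))]) (by norm_num)
    calc ‖F y‖ = ε * ‖ψ (ε * ((x:ℝ) - (y:ℝ)))‖ := by
          simp only [hF, norm_mul, Complex.norm_real, Real.norm_eq_abs, abs_of_pos hε]
      _ ≤ ε * (Dψ * ((1 + (ε * ((x:ℝ) - (y:ℝ)))^2)^6)⁻¹) :=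
          mul_le_mul_of_nonneg_left (hDψ _) hε.le
      _ ≤ ε * (Dψ * (1 + (ε * ((x:ℝ) - (y:ℝ)))^2)⁻¹) := by
          apply mul_le_mul_of_nonneg_left _ hε.le
          exact mul_le_mul_of_nonneg_left h6 hDψ0
      _ = Dψ * Kf y := by simp only [hKf]; ring
  have hFnorm : Summable (fun y => ‖F y‖) :=
    Summable.of_nonneg_of_le (fun y => norm_nonneg _) hFK (hker.1.mul_left Dψ)
  have hFsum : Summable F := hFnorm.of_norm
  -- pointwise bound for far terms
  have hfar : ∀ y : ℤ, ((ε * ((x:ℝ) - a))^2 ≤ (ε * ((x:ℝ) - (y:ℝ)))^2 ∨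
      (ε * ((x:ℝ) - b))^2 ≤ (ε * ((x:ℝ) - (y:ℝ)))^2) →
      ‖F y‖ ≤ (Dψ * (ia + ib)) * Kf y := by
    intro y hy
    have hcore : ∀ r : ℝ, (ε * ((x:ℝ) - r))^2 ≤ (ε * ((x:ℝ) - (y:ℝ)))^2 →
        ‖F y‖ ≤ (Dψ * ((1 + (ε * ((x:ℝ) - r))^2)^5)⁻¹) * Kf y := by
      intro r hr
      have h1 := inv_bound hr
      calc ‖F y‖ = ε * ‖ψ (ε * ((x:ℝ) - (y:ℝ)))‖ := by
            simp only [hF, norm_mul, Complex.norm_real, Real.norm_eq_abs, abs_of_pos hε]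
        _ ≤ ε * (Dψ * ((1 + (ε * ((x:ℝ) - (y:ℝ)))^2)^6)⁻¹) :=
            mul_le_mul_of_nonneg_left (hDψ _) hε.le
        _ ≤ ε * (Dψ * (((1 + (ε * ((x:ℝ) - r))^2)^5)⁻¹ * (1 + (ε * ((x:ℝ) - (y:ℝ)))^2)⁻¹)) := by
            apply mul_le_mul_of_nonneg_left _ hε.le
            exact mul_le_mul_of_nonneg_left h1 hDψ0
        _ = (Dψ * ((1 + (ε * ((x:ℝ) - r))^2)^5)⁻¹) * Kf y := by
            simp only [hKf]; ring
    rcases hy with hy | hy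
    · calc ‖F y‖ ≤ (Dψ * ia) * Kf y := hcore a hy
        _ ≤ (Dψ * (ia + ib)) * Kf y := by
            apply mul_le_mul_of_nonneg_right _ (hKf0 y)
            apply mul_le_mul_of_nonneg_left _ hDψ0
            linarith
    · calc ‖F y‖ ≤ (Dψ * ib) * Kf y := hcore b hy
        _ ≤ (Dψ * (ia + ib)) * Kf y := by
            apply mul_le_mul_of_nonneg_right _ (hKf0 y)
            apply mul_le_mul_of_nonneg_left _ hDψ0
            linarith
  -- split of the sum
  set G : ℤ → ℂ := fun y => if a ≤ (y:ℝ) ∧ (y:ℝ) ≤ b then F y else 0 with hG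
  set H : ℤ → ℂ := fun y => if a ≤ (y:ℝ) ∧ (y:ℝ) ≤ b then 0 else F y with hH
  have hGle : ∀ y, ‖G y‖ ≤ ‖F y‖ := by
    intro y
    simp only [hG]
    by_cases h : a ≤ (y:ℝ) ∧ (y:ℝ) ≤ b <;> simp [h]
  have hHle : ∀ y, ‖H y‖ ≤ ‖F y‖ := by
    intro y
    simp only [hH]
    by_cases h : a ≤ (y:ℝ) ∧ (y:ℝ) ≤ b <;> simp [h]
  have hGsum : Summable G := Summable.of_norm_bounded hFnorm hGle
  have hHsum : Summable H := Summable.of_norm_bounded hFnorm hHle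
  have hGn : Summable (fun y => ‖G y‖) :=
    Summable.of_nonneg_of_le (fun y => norm_nonneg _) hGle hFnorm
  have hHn : Summable (fun y => ‖H y‖) :=
    Summable.of_nonneg_of_le (fun y => norm_nonneg _) hHle hFnorm
  have hsplit : (∑' y, G y) + (∑' y, H y) = ∑' y, F y := by
    rw [← Summable.tsum_add hGsum hHsum]
    apply tsum_congr
    intro y
    simp only [hG, hH]
    by_cases h : a ≤ (y:ℝ) ∧ (y:ℝ) ≤ b <;> simp [h]
  -- Poisson bound
  have hpoisson : ‖(∑' y, F y) - 1‖ ≤ 7 * Dφ * ε^10 := by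
    have heq : (∑' y, F y) = ∑' m : ℤ, (ε:ℂ) * ψ (ε * (m:ℝ)) := by
      rw [← Equiv.tsum_eq (Equiv.subLeft x) F]
      apply tsum_congr
      intro m
      simp only [hF, Equiv.subLeft_apply]
      push_cast
      ring_nf
    rw [heq]
    exact hDφ ε hε hε1
  have hKsum_bound : ∀ (J : ℤ → ℂ), Summable (fun y => ‖J y‖) →
      (∀ y, ‖J y‖ ≤ (Dψ * (ia + ib)) * Kf y) → ‖∑' y, J y‖ ≤ 7 * (Dψ * (ia + ib)) := by
    intro J hJn hJle
    calc ‖∑' y, J y‖ ≤ ∑' y, ‖J y‖ := norm_tsum_le_tsum_norm hJn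
      _ ≤ ∑' y, (Dψ * (ia + ib)) * Kf y := Summable.tsum_le_tsum hJle hJn (hker.1.mul_left _)
      _ = (Dψ * (ia + ib)) * ∑' y, Kf y := tsum_mul_left
      _ ≤ (Dψ * (ia + ib)) * 7 := by
          apply mul_le_mul_of_nonneg_left hker.2 (by positivity)
      _ = 7 * (Dψ * (ia + ib)) := by ring
  by_cases hx : a ≤ (x:ℝ) ∧ (x:ℝ) ≤ b
  · rw [if_pos hx]
    have h1 : (∑' y, G y) - 1 = ((∑' y, F y) - 1) - ∑' y, H y := by
      rw [← hsplit]; ring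
    have hHfar : ∀ y, ‖H y‖ ≤ (Dψ * (ia + ib)) * Kf y := by
      intro y
      by_cases h : a ≤ (y:ℝ) ∧ (y:ℝ) ≤ b
      · simp only [hH, if_pos h, norm_zero]
        positivity
      · simp only [hH, if_neg h]
        apply hfar
        rcases not_and_or.mp h with h' | h'
        · left
          push_neg at h'
          have h2 : ((x:ℝ) - a)^2 ≤ ((x:ℝ) - (y:ℝ))^2 := by nlinarith [hx.1, hx.2]
          nlinarith [sq_nonneg ε]
        · right
          push_neg at h'
          have h2 : ((x:ℝ) - b)^2 ≤ ((x:ℝ) - (y:ℝ))^2 := by nlinarith [hx.1, hx.2]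
          nlinarith [sq_nonneg ε]
    have hHb := hKsum_bound H hHn hHfar
    calc ‖(∑' y, G y) - 1‖ = ‖((∑' y, F y) - 1) - ∑' y, H y‖ := by rw [h1]
      _ ≤ ‖(∑' y, F y) - 1‖ + ‖∑' y, H y‖ := norm_sub_le _ _
      _ ≤ 7 * Dφ * ε^10 + 7 * (Dψ * (ia + ib)) := add_le_add hpoisson hHb
      _ ≤ (7*Dφ + 7*Dψ + 1) * (ε^10 + ia + ib) := by
          nlinarith [mul_nonneg hDφ0 hia0, mul_nonneg hDφ0 hib0, mul_nonneg hDψ0 hε10]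
  · rw [if_neg hx, sub_zero]
    have hGfar : ∀ y, ‖G y‖ ≤ (Dψ * (ia + ib)) * Kf y := by
      intro y
      by_cases h : a ≤ (y:ℝ) ∧ (y:ℝ) ≤ b
      · simp only [hG, if_pos h]
        apply hfar
        rcases not_and_or.mp hx with h' | h'
        · left
          push_neg at h'
          have h2 : ((x:ℝ) - a)^2 ≤ ((x:ℝ) - (y:ℝ))^2 := by nlinarith [h.1, h.2]
          nlinarith [sq_nonneg ε]
        · right
          push_neg at h'
          have h2 : ((x:ℝ) - b)^2 ≤ ((x:ℝ) - (y:ℝ))^2 := by nlinarith [h.1, h.2]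
          nlinarith [sq_nonneg ε]
      · simp only [hG, if_neg h, norm_zero]
        positivity
    calc ‖∑' y, G y‖ ≤ 7 * (Dψ * (ia + ib)) := hKsum_bound G hGn hGfar
      _ ≤ (7*Dφ + 7*Dψ + 1) * (ε^10 + ia + ib) := by
          nlinarith [mul_nonneg hDφ0 hia0, mul_nonneg hDφ0 hib0, mul_nonneg hDψ0 hε10]
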